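/- For λ ∈ (0,1), the function s ↦ λ^{-s} Γ(s)Γ(1/λ−s)/Γ(1/λ) is analytic on ℂ minus the set {0,−1,−2,…} ∪ {1/λ, 1/λ+1, 1/λ+2,…}, and it agrees with Γ_λ(s) = ∫₀^∞ (1+λt)^{-1/λ} t^{s-1} dt on the strip 0 < Re(s) < 1/λ. -/

import Mathlib

open MeasureTheory Complex Set

lemma my_analyticAt_Gamma {s : ℂ} (hs : ∀ m : ℕ, s ≠ -m) :
    AnalyticAt ℂ Complex.Gamma s := by
  rw [analyticAt_iff_eventually_differentiableAt]
  have hcl : IsClosed ((fun n : ℤ => (n : ℂ)) '' {n : ℤ | n ≤ 0}) :=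
    Complex.closedEmbedding_intCast.isClosedMap _ (isClosed_discrete _)
  have hmem : s ∈ ((fun n : ℤ => (n : ℂ)) '' {n : ℤ | n ≤ 0})ᶜ := by
    rintro ⟨n, hn, rfl⟩
    refine hs (-n).toNat ?_
    have h1 : ((-n).toNat : ℤ) = -n := Int.toNat_of_nonneg (by simpa using hn)
    have h2 : (((-n).toNat : ℕ) : ℂ) = ((-n : ℤ) : ℂ) := by exact_mod_cast congrArg (Int.cast : ℤ → ℂ) h1
    show (n : ℂ) = -((-n).toNat : ℕ)
    rw [h2]; push_cast; ring
  filter_upwards [hcl.isOpen_compl.eventually_mem hmem] with z hz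
  refine Complex.differentiableAt_Gamma z fun m hm => hz ⟨-(m : ℤ), by simp, by rw [hm]; push_cast; ring⟩

lemma my_key (a s : ℂ) {x : ℝ} (hx : x ∈ Ioo (0:ℝ) 1) :
    (((1-x)^2)⁻¹ : ℝ) • ( ((1 + x/(1-x) : ℝ) : ℂ) ^ (-a) * ((x/(1-x) : ℝ) : ℂ) ^ (s-1) )
      = (x:ℂ) ^ (s-1) * (1 - (x:ℂ)) ^ (a - s - 1) := by
  have h1x : (0:ℝ) < 1 - x := by linarith [hx.2]
  have hy : ((1 - x : ℝ) : ℂ) ≠ 0 := Complex.ofReal_ne_zero.2 h1x.ne'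
  have hyarg : ((1 - x : ℝ) : ℂ).arg ≠ Real.pi := by
    rw [Complex.arg_ofReal_of_nonneg h1x.le]
    exact (Real.pi_ne_zero).symm
  have e1 : 1 + x/(1-x) = (1-x)⁻¹ := by field_simp; ring
  have e2 : (x/(1-x) : ℝ) = x * (1-x)⁻¹ := by ring
  rw [e1, e2, Complex.ofReal_mul, Complex.mul_cpow_ofReal_nonneg hx.1.le (by positivity),
    Complex.ofReal_inv, Complex.inv_cpow _ _ hyarg, Complex.inv_cpow _ _ hyarg,
    Complex.cpow_neg]
  have e3 : a - s - 1 = a + (-(s-1)) + (-(2:ℂ)) := by ring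
  have e4 : (1 : ℂ) - (x:ℂ) = ((1 - x : ℝ) : ℂ) := by push_cast; ring
  rw [e4, e3, Complex.cpow_add _ _ hy, Complex.cpow_add _ _ hy, Complex.cpow_neg,
    Complex.cpow_neg, inv_inv]
  have e5 : ((1 - x : ℝ) : ℂ) ^ (2:ℂ) = (((1-x)^2 : ℝ) : ℂ) := by
    rw [show (2:ℂ) = ((2:ℕ):ℂ) by norm_num, Complex.cpow_natCast]
    push_cast; ring
  rw [e5, Complex.real_smul]
  push_cast
  ring

lemma my_Ioi_beta (a s : ℂ) :
    (∫ u in Ioi (0:ℝ), ((1 + u : ℝ) : ℂ) ^ (-a) * (u:ℂ) ^ (s-1))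
      = Complex.betaIntegral s (a - s) := by
  have himg : (fun x : ℝ => x / (1-x)) '' Ioo 0 1 = Ioi 0 := by
    ext u
    simp only [Set.mem_image, Set.mem_Ioi, Set.mem_Ioo]
    constructor
    · rintro ⟨x, hx, rfl⟩
      exact div_pos hx.1 (by linarith [hx.2])
    · intro hu
      have h1u : (0:ℝ) < 1 + u := by linarith
      refine ⟨u/(1+u), ⟨by positivity, by rw [div_lt_one h1u]; linarith⟩, ?_⟩
      field_simp; ring
  have hderiv : ∀ x ∈ Ioo (0:ℝ) 1,
      HasDerivWithinAt (fun x : ℝ => x/(1-x)) (((1-x)^2)⁻¹) (Ioo 0 1) x := by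
    intro x hx
    have h1x : 1 - x ≠ 0 := by have := hx.2; intro h; linarith [hx.2]
    have := (hasDerivAt_id x).div ((hasDerivAt_const x (1:ℝ)).sub (hasDerivAt_id x)) h1x
    refine this.hasDerivWithinAt.congr_deriv ?_
    show (1 * (1 - x) - x * (0 - 1)) / (1 - x) ^ 2 = ((1-x)^2)⁻¹
    rw [div_eq_mul_inv]; ring
  have hinj : InjOn (fun x : ℝ => x/(1-x)) (Ioo 0 1) := by
    intro x hx y hy h
    have hx1 : 1 - x ≠ 0 := by intro h'; linarith [hx.2]
    have hy1 : 1 - y ≠ 0 := by intro h'; linarith [hy.2]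
    simp only at h
    field_simp at h
    nlinarith [h]
  rw [← himg, integral_image_eq_integral_abs_deriv_smul measurableSet_Ioo hderiv hinj]
  have : ∀ x ∈ Ioo (0:ℝ) 1,
      |((1-x)^2)⁻¹| • (((1 + x/(1-x) : ℝ) : ℂ) ^ (-a) * ((x/(1-x) : ℝ) : ℂ) ^ (s-1))
        = (x:ℂ) ^ (s-1) * (1 - (x:ℂ)) ^ ((a - s) - 1) := by
    intro x hx
    have h1x : (0:ℝ) < 1 - x := by linarith [hx.2]
    rw [_root_.abs_of_nonneg (by positivity : (0:ℝ) ≤ ((1-x)^2)⁻¹)]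
    exact my_key a s hx
  rw [MeasureTheory.setIntegral_congr_fun measurableSet_Ioo this,
    Complex.betaIntegral, intervalIntegral.integral_of_le zero_le_one,
    MeasureTheory.integral_Ioc_eq_integral_Ioo]

theorem degGamma_analytic_continuation (l : ℝ) (hl : l ∈ Set.Ioo (0 : ℝ) 1) :
    (∀ s : ℂ,
        s ∉ ({s : ℂ | ∃ n : ℕ, s = -(n : ℂ)} ∪ {s : ℂ | ∃ n : ℕ, s = (1 / l : ℂ) + n}) →
        AnalyticAt ℂ
          (fun s : ℂ =>
            (l : ℂ) ^ (-s) * Complex.Gamma s * Complex.Gamma (1 / l - s) /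
              Complex.Gamma (1 / l)) s) ∧
      ∀ s : ℂ, 0 < s.re → s.re < 1 / l →
        (l : ℂ) ^ (-s) * Complex.Gamma s * Complex.Gamma (1 / l - s) /
            Complex.Gamma (1 / l) =
          ∫ t in Set.Ioi (0 : ℝ),
            ((1 + l * t : ℝ) : ℂ) ^ (-(1 / l) : ℂ) * (t : ℂ) ^ (s - 1) := by
  obtain ⟨hl0, hl1⟩ := hl
  have hlne : (l : ℂ) ≠ 0 := Complex.ofReal_ne_zero.2 hl0.ne'
  have hAre : (1 / (l:ℂ)).re = 1/l := by
    rw [show (1 / (l:ℂ)) = ((1/l : ℝ) : ℂ) by push_cast; ring, Complex.ofReal_re]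
  have hGl : Complex.Gamma (1/(l:ℂ)) ≠ 0 :=
    Complex.Gamma_ne_zero_of_re_pos (by rw [hAre]; positivity)
  constructor
  · intro s hs
    simp only [Set.mem_union, Set.mem_setOf_eq, not_or, not_exists] at hs
    obtain ⟨hs1, hs2⟩ := hs
    have A1 : AnalyticAt ℂ (fun s : ℂ => (l:ℂ) ^ (-s)) s :=
      analyticAt_const.cpow (analyticAt_id.neg) (Complex.ofReal_mem_slitPlane.2 hl0)
    have A2 : AnalyticAt ℂ Complex.Gamma s := my_analyticAt_Gamma hs1
    have A3 : AnalyticAt ℂ (fun s : ℂ => Complex.Gamma (1/(l:ℂ) - s)) s := by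
      have h3 : ∀ m : ℕ, (1/(l:ℂ) - s) ≠ -m := by
        intro m h
        exact hs2 m (by linear_combination -h)
      exact (my_analyticAt_Gamma h3).comp (analyticAt_const.sub analyticAt_id)
    exact ((A1.mul A2).mul A3).div analyticAt_const hGl
  · intro s h0 h1
    have key := my_Ioi_beta (1/(l:ℂ)) s
    have hbeta : Complex.Gamma s * Complex.Gamma (1/(l:ℂ) - s)
        = Complex.Gamma (1/(l:ℂ)) * Complex.betaIntegral s (1/(l:ℂ) - s) := by
      have h2 := Complex.Gamma_mul_Gamma_eq_betaIntegral h0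
        (show 0 < (1/(l:ℂ) - s).re by rw [Complex.sub_re, hAre]; linarith)
      rwa [show s + (1/(l:ℂ) - s) = 1/(l:ℂ) by ring] at h2
    have hs_ne : (l:ℂ) ^ (s-1) ≠ 0 := by
      rw [Complex.cpow_def_of_ne_zero hlne]; exact Complex.exp_ne_zero _
    have hscale : (∫ t in Ioi (0:ℝ), ((1 + l*t : ℝ):ℂ) ^ (-(1/(l:ℂ))) * (t:ℂ) ^ (s-1))
        = (l:ℂ) ^ (-s) * ∫ u in Ioi (0:ℝ), ((1 + u : ℝ):ℂ) ^ (-(1/(l:ℂ))) * (u:ℂ) ^ (s-1) := by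
      have h := integral_comp_mul_left_Ioi
        (fun u : ℝ => ((1 + u : ℝ):ℂ) ^ (-(1/(l:ℂ))) * (u:ℂ) ^ (s-1)) 0 hl0
      rw [mul_zero] at h
      have hpt : ∀ t ∈ Ioi (0:ℝ),
          (fun u : ℝ => ((1 + u : ℝ):ℂ) ^ (-(1/(l:ℂ))) * (u:ℂ) ^ (s-1)) (l*t)
            = (l:ℂ) ^ (s-1) * (((1 + l*t : ℝ):ℂ) ^ (-(1/(l:ℂ))) * (t:ℂ) ^ (s-1)) := by
        intro t ht
        simp only
        rw [Complex.ofReal_mul, Complex.mul_cpow_ofReal_nonneg hl0.le (le_of_lt ht)]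
        ring
      rw [MeasureTheory.setIntegral_congr_fun measurableSet_Ioi hpt,
        MeasureTheory.integral_const_mul, Complex.real_smul, Complex.ofReal_inv] at h
      have h1 : (l:ℂ) ^ (s-1) * (l:ℂ)^(1:ℂ) = (l:ℂ) ^ s := by
        rw [← Complex.cpow_add _ _ hlne, sub_add_cancel]
      rw [Complex.cpow_neg, ← h1, Complex.cpow_one]
      field_simp at h ⊢
      linear_combination h
    rw [hscale, key, div_eq_iff hGl]
    linear_combination (l:ℂ)^(-s) * hbeta
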